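/- Let h : ℝ^d → ℝ^d be twice continuously differentiable, x* ∈ ℝ^d with h(x*) = 0, and suppose constants K̃ ≥ 1, λ' > 0 satisfy ‖exp(Dh(x*) t)‖ ≤ K̃ exp(−λ' t) for all t ≥ 0. Fix κ ∈ (0,1) and set λ = ((1−κ)/K̃²) λ'. Let V : U → ℝ be a continuously differentiable Liapunov function for x* on an open set U containing x*, i.e., V(x*) = 0 and, for all x ∈ U with x ≠ x*, V(x) > 0 and ∇V(x)·h(x) < 0. Let r > 0 be such that the sublevel set V^r := {x ∈ U : V(x) ≤ r} is compact, and let φ : [0,∞) × V^r → ℝ^d be a semiflow of the ODE ẋ = h(x), i.e., φ(0,u) = u, (d/dt)φ(t,u) = h(φ(t,u)), and φ(t,u) ∈ V^r for all u ∈ V^r and t ≥ 0. Then there exists a constant K₁ ≥ 0 such that for all u₀, u₁ ∈ V^r and all t ≥ 0: ‖φ(t,u₀) − φ(t,u₁)‖ ≤ K₁ ‖u₀ − u₁‖ exp(−λ t). -/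

import Mathlib

open Set intervalIntegral NormedSpace

/-- Integral form of Gronwall's inequality. -/
lemma gronwall_int {w : ℝ → ℝ} {a b T : ℝ} (hw : Continuous w) (hb : 0 ≤ b)
    (H : ∀ t, T ≤ t → w t ≤ a + b * ∫ τ in T..t, w τ) :
    ∀ t, T ≤ t → w t ≤ a * Real.exp (b * (t - T)) := by
  set F : ℝ → ℝ := fun t => a + b * ∫ τ in T..t, w τ with hF
  have hF' : ∀ t : ℝ, HasDerivAt F (b * w t) t := fun t =>
    (((hw.integral_hasStrictDerivAt T t).hasDerivAt).const_mul b).const_add a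
  set G : ℝ → ℝ := fun t => F t * Real.exp (-b * (t - T)) with hG
  have hG' : ∀ t : ℝ, HasDerivAt G
      (b * w t * Real.exp (-b * (t - T)) + F t * (Real.exp (-b * (t - T)) * (-b))) t := by
    intro t
    have he : HasDerivAt (fun t : ℝ => Real.exp (-b * (t - T)))
        (Real.exp (-b * (t - T)) * (-b)) t := by
      have h1 : HasDerivAt (fun t : ℝ => -b * (t - T)) (-b) t := by
        simpa using (((hasDerivAt_id t).sub_const T).const_mul (-b))
      exact h1.exp
    exact (hF' t).mul he
  have hanti : AntitoneOn G (Ici T) := by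
    apply antitoneOn_of_deriv_nonpos (convex_Ici T)
    · exact fun t _ => ((hG' t).continuousAt).continuousWithinAt
    · exact fun t _ => (hG' t).differentiableAt.differentiableWithinAt
    · intro t ht
      rw [interior_Ici] at ht
      rw [(hG' t).deriv]
      have hwt : w t ≤ F t := H t (le_of_lt ht)
      have : b * w t * Real.exp (-b * (t - T)) + F t * (Real.exp (-b * (t - T)) * (-b))
          = b * (w t - F t) * Real.exp (-b * (t - T)) := by ring
      rw [this]
      have hp := (Real.exp_pos (-b * (t - T))).le
      have h5 : b * (w t - F t) ≤ 0 := mul_nonpos_of_nonneg_of_nonpos hb (by linarith)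
      exact mul_nonpos_of_nonpos_of_nonneg h5 hp
  intro t ht
  have h1 : G t ≤ G T := hanti self_mem_Ici ht ht
  have h2 : G T = a := by simp [hG, hF]
  have h3 : w t ≤ F t := H t ht
  have h4 : F t = G t * Real.exp (b * (t - T)) := by
    rw [hG]
    rw [mul_assoc, ← Real.exp_add]
    simp
  calc w t ≤ F t := h3
    _ = G t * Real.exp (b * (t - T)) := h4
    _ ≤ a * Real.exp (b * (t - T)) := by
        have := Real.exp_pos (b * (t - T))
        nlinarith [h2 ▸ h1]

set_option synthInstance.maxHeartbeats 1000000 in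
set_option maxHeartbeats 1000000 in
/-- Variation-of-constants estimate: if `y' = A y + g` with `‖g τ‖ ≤ η ‖y τ‖` for `τ ≥ T`,
and `‖exp (s • A)‖ ≤ K e^{-λ' s}` for `s ≥ 0`, then
`‖y t‖ ≤ K ‖y T‖ e^{(Kη - λ')(t-T)}` for `t ≥ T`. -/
lemma varconst {E : Type*} [NormedAddCommGroup E] [NormedSpace ℝ E] [CompleteSpace E]
    (A : E →L[ℝ] E) (Ktil lam' η T : ℝ) (hη : 0 ≤ η) (hT0 : 0 ≤ T)
    (hexp : ∀ s : ℝ, 0 ≤ s → ‖NormedSpace.exp (s • A)‖ ≤ Ktil * Real.exp (-lam' * s))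
    (y g : ℝ → E)
    (hyd : ∀ τ : ℝ, 0 ≤ τ → HasDerivAt y (A (y τ) + g τ) τ)
    (hycont : ContinuousOn y (Ici 0)) (hgcont : ContinuousOn g (Ici 0))
    (hgb : ∀ τ : ℝ, T ≤ τ → ‖g τ‖ ≤ η * ‖y τ‖) :
    ∀ t : ℝ, T ≤ t → ‖y t‖ ≤ Ktil * ‖y T‖ * Real.exp ((Ktil * η - lam') * (t - T)) := by
  have hK0 : 0 ≤ Ktil := by
    have h0 := hexp 0 le_rfl
    have h1 : (0:ℝ) ≤ ‖NormedSpace.exp ((0:ℝ) • A)‖ := norm_nonneg _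
    nlinarith [Real.exp_pos (-lam' * (0:ℝ))]
  set w : ℝ → ℝ := fun τ => Real.exp (lam' * (max T τ - T)) * ‖y (max T τ)‖ with hwdef
  have hymax : Continuous fun τ => y (max T τ) :=
    hycont.comp_continuous (continuous_const.max continuous_id)
      (fun τ => mem_Ici.mpr (hT0.trans (le_max_left T τ)))
  have hwcont : Continuous w :=
    (Real.continuous_exp.comp
      (continuous_const.mul ((continuous_const.max continuous_id).sub continuous_const))).mul
      hymax.norm
  have hweq : ∀ τ : ℝ, T ≤ τ → w τ = Real.exp (lam' * (τ - T)) * ‖y τ‖ := by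
    intro τ hτ
    simp [hwdef, max_eq_right hτ]
  have hsub : ∀ t : ℝ, T ≤ t → Icc T t ⊆ Ici (0:ℝ) :=
    fun t _ τ hτ => mem_Ici.mpr (hT0.trans hτ.1)
  have H : ∀ t : ℝ, T ≤ t → w t ≤ Ktil * ‖y T‖ + Ktil * η * ∫ τ in T..t, w τ := by
    intro t ht
    have hz : ∀ τ ∈ uIcc T t,
        HasDerivAt (fun τ => (NormedSpace.exp ((t - τ) • A)) (y τ))
          ((NormedSpace.exp ((t - τ) • A)) (g τ)) τ := by
      intro τ hτ
      rw [uIcc_of_le ht] at hτ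
      have hτ0 : 0 ≤ τ := hT0.trans hτ.1
      have h1 : HasDerivAt (fun τ : ℝ => t - τ) (-1) τ := by
        simpa using (hasDerivAt_id τ).const_sub t
      have h2 := hasDerivAt_exp_smul_const' (𝕂 := ℝ) (𝔸 := E →L[ℝ] E) A (t - τ)
      have hMd : HasDerivAt (fun τ : ℝ => NormedSpace.exp ((t - τ) • A))
          ((-1 : ℝ) • (A * NormedSpace.exp ((t - τ) • A))) τ :=
        HasDerivAt.scomp (x := τ) (h := fun τ : ℝ => t - τ) h2 h1
      have happ := hMd.clm_apply (hyd τ hτ0)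
      have hcomm : A * NormedSpace.exp ((t - τ) • A) = NormedSpace.exp ((t - τ) • A) * A :=
        (((Commute.refl A).smul_right (t - τ)).exp_right).eq
      convert happ using 1
      have e1 : ((-1 : ℝ) • (A * NormedSpace.exp ((t - τ) • A))) (y τ)
          = -((NormedSpace.exp ((t - τ) • A)) (A (y τ))) := by
        rw [hcomm]
        simp [ContinuousLinearMap.smul_apply, ContinuousLinearMap.mul_apply]
      rw [e1, map_add]
      abel
    have hMgcont : ContinuousOn (fun τ => (NormedSpace.exp ((t - τ) • A)) (g τ)) (uIcc T t) := by
      apply ContinuousOn.clm_apply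
      · exact ((continuous_iff_continuousAt.mpr fun x => (NormedSpace.exp_analytic (𝕂 := ℝ) x).continuousAt).comp
          ((continuous_const.sub continuous_id).smul continuous_const)).continuousOn
      · exact hgcont.mono (by rw [uIcc_of_le ht]; exact hsub t ht)
    have hFTC := intervalIntegral.integral_eq_sub_of_hasDerivAt hz hMgcont.intervalIntegrable
    have hMt : (NormedSpace.exp ((t - t) • A)) (y t) = y t := by
      rw [sub_self, zero_smul, NormedSpace.exp_zero, ContinuousLinearMap.one_apply]
    have hyeq : y t = (NormedSpace.exp ((t - T) • A)) (y T) +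
        ∫ τ in T..t, (NormedSpace.exp ((t - τ) • A)) (g τ) := by
      rw [hFTC, hMt]
      abel
    have hMTb : ‖(NormedSpace.exp ((t - T) • A)) (y T)‖ ≤
        Ktil * Real.exp (-lam' * (t - T)) * ‖y T‖ := by
      calc ‖(NormedSpace.exp ((t - T) • A)) (y T)‖
          ≤ ‖NormedSpace.exp ((t - T) • A)‖ * ‖y T‖ :=
            (NormedSpace.exp ((t - T) • A)).le_opNorm _
        _ ≤ Ktil * Real.exp (-lam' * (t - T)) * ‖y T‖ :=
            mul_le_mul_of_nonneg_right (hexp (t - T) (sub_nonneg.mpr ht)) (norm_nonneg _)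
    have hRHScont : ContinuousOn
        (fun τ => Ktil * Real.exp (-lam' * (t - τ)) * (η * ‖y τ‖)) (uIcc T t) := by
      apply ContinuousOn.mul
      · exact (continuous_const.mul (Real.continuous_exp.comp
          (continuous_const.mul (continuous_const.sub continuous_id)))).continuousOn
      · exact continuous_const.continuousOn.mul
          ((hycont.mono (by rw [uIcc_of_le ht]; exact hsub t ht)).norm)
    have hintb : ‖∫ τ in T..t, (NormedSpace.exp ((t - τ) • A)) (g τ)‖ ≤
        ∫ τ in T..t, Ktil * Real.exp (-lam' * (t - τ)) * (η * ‖y τ‖) := by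
      refine (intervalIntegral.norm_integral_le_integral_norm ht).trans ?_
      apply intervalIntegral.integral_mono_on ht hMgcont.norm.intervalIntegrable
        hRHScont.intervalIntegrable
      intro τ hτ
      calc ‖(NormedSpace.exp ((t - τ) • A)) (g τ)‖
          ≤ ‖NormedSpace.exp ((t - τ) • A)‖ * ‖g τ‖ :=
            (NormedSpace.exp ((t - τ) • A)).le_opNorm _
        _ ≤ (Ktil * Real.exp (-lam' * (t - τ))) * (η * ‖y τ‖) :=
            mul_le_mul (hexp (t - τ) (sub_nonneg.mpr hτ.2)) (hgb τ hτ.1) (norm_nonneg _)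
              (by positivity)
    have base : ‖y t‖ ≤ Ktil * Real.exp (-lam' * (t - T)) * ‖y T‖ +
        ∫ τ in T..t, Ktil * Real.exp (-lam' * (t - τ)) * (η * ‖y τ‖) := by
      rw [hyeq]
      exact (norm_add_le _ _).trans (add_le_add hMTb hintb)
    have e2 : Real.exp (lam' * (t - T)) *
        ∫ τ in T..t, Ktil * Real.exp (-lam' * (t - τ)) * (η * ‖y τ‖)
        = Ktil * η * ∫ τ in T..t, w τ := by
      rw [← intervalIntegral.integral_const_mul, ← intervalIntegral.integral_const_mul]
      apply intervalIntegral.integral_congr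
      intro τ hτ
      rw [uIcc_of_le ht] at hτ
      simp only
      rw [hweq τ hτ.1]
      have hE : Real.exp (lam' * (t - T)) * Real.exp (-lam' * (t - τ))
          = Real.exp (lam' * (τ - T)) := by
        rw [← Real.exp_add]
        congr 1
        ring
      rw [← hE]
      ring
    rw [hweq t ht]
    calc Real.exp (lam' * (t - T)) * ‖y t‖
        ≤ Real.exp (lam' * (t - T)) * (Ktil * Real.exp (-lam' * (t - T)) * ‖y T‖ +
          ∫ τ in T..t, Ktil * Real.exp (-lam' * (t - τ)) * (η * ‖y τ‖)) :=
          mul_le_mul_of_nonneg_left base (Real.exp_pos _).le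
      _ = (Real.exp (lam' * (t - T)) * Real.exp (-lam' * (t - T))) * (Ktil * ‖y T‖) +
          Real.exp (lam' * (t - T)) *
            ∫ τ in T..t, Ktil * Real.exp (-lam' * (t - τ)) * (η * ‖y τ‖) := by ring
      _ = Ktil * ‖y T‖ + Ktil * η * ∫ τ in T..t, w τ := by
          rw [← Real.exp_add, e2]
          simp
  intro t ht
  have hfin := gronwall_int hwcont (mul_nonneg hK0 hη) H t ht
  rw [hweq t ht] at hfin
  have hexppos := Real.exp_pos (lam' * (t - T))
  have h2 : ‖y t‖ ≤ Ktil * ‖y T‖ * Real.exp (Ktil * η * (t - T)) / Real.exp (lam' * (t - T)) := by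
    rw [le_div_iff₀ hexppos]
    calc ‖y t‖ * Real.exp (lam' * (t - T)) = Real.exp (lam' * (t - T)) * ‖y t‖ := by ring
      _ ≤ Ktil * ‖y T‖ * Real.exp (Ktil * η * (t - T)) := hfin
  calc ‖y t‖ ≤ Ktil * ‖y T‖ * Real.exp (Ktil * η * (t - T)) / Real.exp (lam' * (t - T)) := h2
    _ = Ktil * ‖y T‖ * Real.exp (Ktil * η * (t - T) - lam' * (t - T)) := by
        rw [Real.exp_sub]
        ring
    _ = Ktil * ‖y T‖ * Real.exp ((Ktil * η - lam') * (t - T)) := by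
        congr 2
        ring

set_option maxHeartbeats 1000000 in
/-- Exponential contraction of the semiflow on a compact sublevel set of a Liapunov
function near an equilibrium x* of ẋ = h(x) (Lemma "CloseSolutionsBound"):
∃ K₁ ≥ 0 such that ‖φ(t,u₀) − φ(t,u₁)‖ ≤ K₁ ‖u₀ − u₁‖ exp(−λ t) for all u₀, u₁ in the
sublevel set V^r and all t ≥ 0, where λ = ((1−κ)/K̃²) λ'. -/
theorem stmt11 {d : ℕ}
    (h : EuclideanSpace ℝ (Fin d) → EuclideanSpace ℝ (Fin d))
    (hh : ContDiff ℝ 2 h)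
    (xstar : EuclideanSpace ℝ (Fin d)) (hzero : h xstar = 0)
    (Ktil lam' : ℝ) (hK : 1 ≤ Ktil) (hlam' : 0 < lam')
    (hexp : ∀ t : ℝ, 0 ≤ t →
      ‖NormedSpace.exp (t • fderiv ℝ h xstar)‖ ≤ Ktil * Real.exp (-lam' * t))
    (κ : ℝ) (hκ : κ ∈ Set.Ioo (0 : ℝ) 1)
    (lam : ℝ) (hlamdef : lam = ((1 - κ) / Ktil ^ 2) * lam')
    (U : Set (EuclideanSpace ℝ (Fin d))) (hU : IsOpen U) (hxU : xstar ∈ U)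
    (V : EuclideanSpace ℝ (Fin d) → ℝ) (hV : ContDiffOn ℝ 1 V U)
    (hVzero : V xstar = 0)
    (hVpos : ∀ x ∈ U, x ≠ xstar →
      0 < V x ∧ (inner ℝ (gradient V x) (h x) : ℝ) < 0)
    (r : ℝ) (hr : 0 < r)
    (hcompact : IsCompact {x ∈ U | V x ≤ r})
    (φ : ℝ → EuclideanSpace ℝ (Fin d) → EuclideanSpace ℝ (Fin d))
    (hφ0 : ∀ u ∈ {x ∈ U | V x ≤ r}, φ 0 u = u)
    (hφd : ∀ u ∈ {x ∈ U | V x ≤ r}, ∀ t : ℝ, 0 ≤ t →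
      HasDerivAt (fun τ => φ τ u) (h (φ t u)) t)
    (hφin : ∀ u ∈ {x ∈ U | V x ≤ r}, ∀ t : ℝ, 0 ≤ t → φ t u ∈ {x ∈ U | V x ≤ r}) :
    ∃ K₁ : ℝ, 0 ≤ K₁ ∧
      ∀ u₀ ∈ {x ∈ U | V x ≤ r}, ∀ u₁ ∈ {x ∈ U | V x ≤ r}, ∀ t : ℝ, 0 ≤ t →
        ‖φ t u₀ - φ t u₁‖ ≤ K₁ * ‖u₀ - u₁‖ * Real.exp (-lam * t) := by
  obtain ⟨hκ0, hκ1⟩ := hκ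
  have hKpos : (0:ℝ) < Ktil := lt_of_lt_of_le one_pos hK
  set S : Set (EuclideanSpace ℝ (Fin d)) := {x ∈ U | V x ≤ r} with hSdef
  set A : EuclideanSpace ℝ (Fin d) →L[ℝ] EuclideanSpace ℝ (Fin d) := fderiv ℝ h xstar with hAdef
  have hlamnn : 0 ≤ lam := by
    rw [hlamdef]
    have h1 : (0:ℝ) ≤ 1 - κ := by linarith
    exact mul_nonneg (div_nonneg h1 (by positivity)) hlam'.le
  have hlamle : lam ≤ (1 - κ) * lam' := by
    rw [hlamdef]
    have h1 : (1:ℝ) ≤ Ktil ^ 2 := by nlinarith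
    have h2 : (1 - κ) / Ktil ^ 2 ≤ (1 - κ) := by
      rw [div_le_iff₀ (by positivity)]
      nlinarith
    nlinarith
  have hxS : xstar ∈ S := ⟨hxU, by rw [hVzero]; exact hr.le⟩
  have hSU : S ⊆ U := fun x hx => hx.1
  have hhdiff : Differentiable ℝ h := hh.differentiable (by norm_num)
  have hhcont : Continuous h := hhdiff.continuous
  have hDhcont : Continuous (fderiv ℝ h) := hh.continuous_fderiv (by norm_num)
  have hVcont : ContinuousOn V U := hV.continuousOn
  have hVdiff : ∀ x ∈ U, DifferentiableAt ℝ V x := fun x hx =>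
    (hV.differentiableOn (by norm_num)).differentiableAt (hU.mem_nhds hx)
  have hgrad : ∀ x y, (inner ℝ (gradient V x) y : ℝ) = fderiv ℝ V x y := fun x y =>
    InnerProductSpace.toDual_symm_apply
  have hφcont : ∀ u ∈ S, ContinuousOn (fun τ => φ τ u) (Ici 0) := fun u hu t ht =>
    ((hφd u hu t ht).continuousAt).continuousWithinAt
  -- derivative of V along the flow
  have hVφd : ∀ u ∈ S, ∀ t : ℝ, 0 ≤ t →
      HasDerivAt (fun τ => V (φ τ u)) (fderiv ℝ V (φ t u) (h (φ t u))) t := fun u hu t ht =>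
    ((hVdiff _ (hSU (hφin u hu t ht))).hasFDerivAt).comp_hasDerivAt t (hφd u hu t ht)
  have hinnerle : ∀ x ∈ U, fderiv ℝ V x (h x) ≤ 0 := by
    intro x hx
    by_cases hxe : x = xstar
    · subst hxe; rw [hzero]; simp
    · have := (hVpos x hx hxe).2
      rw [hgrad] at this
      exact this.le
  have hmono : ∀ u ∈ S, AntitoneOn (fun t => V (φ t u)) (Ici 0) := by
    intro u hu
    apply antitoneOn_of_deriv_nonpos (convex_Ici 0)
    · exact fun t ht => (hVφd u hu t ht).continuousAt.continuousWithinAt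
    · intro t ht
      rw [interior_Ici] at ht
      exact (hVφd u hu t ht.le).differentiableAt.differentiableWithinAt
    · intro t ht
      rw [interior_Ici] at ht
      rw [(hVφd u hu t ht.le).deriv]
      exact hinnerle _ (hSU (hφin u hu t ht.le))
  -- Lipschitz constant for h on S
  obtain ⟨L, hL0, hLip⟩ : ∃ L : ℝ, 0 ≤ L ∧ ∀ x ∈ S, ∀ y ∈ S, ‖h x - h y‖ ≤ L * ‖x - y‖ := by
    obtain ⟨R, hSR⟩ := hcompact.isBounded.subset_closedBall xstar
    obtain ⟨C, hC⟩ := (isCompact_closedBall xstar R).exists_bound_of_continuousOn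
      hDhcont.continuousOn
    refine ⟨max C 0, le_max_right _ _, ?_⟩
    intro x hx y hy
    exact (convex_closedBall xstar R).norm_image_sub_le_of_norm_fderiv_le
      (fun z _ => hhdiff z) (fun z hz => (hC z hz).trans (le_max_left _ _)) (hSR hy) (hSR hx)
  -- Step A : finite-time Lipschitz bound on trajectories
  have stepA : ∀ u₀ ∈ S, ∀ u₁ ∈ S, ∀ t : ℝ, 0 ≤ t →
      ‖φ t u₀ - φ t u₁‖ ≤ ‖u₀ - u₁‖ * Real.exp (L * t) := by
    intro u₀ hu₀ u₁ hu₁ t ht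
    have hcont : ContinuousOn (fun τ => φ τ u₀ - φ τ u₁) (Icc 0 t) :=
      ((hφcont u₀ hu₀).sub (hφcont u₁ hu₁)).mono Icc_subset_Ici_self
    have hder : ∀ τ ∈ Ico (0:ℝ) t, HasDerivWithinAt (fun τ => φ τ u₀ - φ τ u₁)
        (h (φ τ u₀) - h (φ τ u₁)) (Ici τ) τ := fun τ hτ =>
      ((hφd u₀ hu₀ τ hτ.1).sub (hφd u₁ hu₁ τ hτ.1)).hasDerivWithinAt
    have hbound : ∀ τ ∈ Ico (0:ℝ) t,
        ‖h (φ τ u₀) - h (φ τ u₁)‖ ≤ L * ‖φ τ u₀ - φ τ u₁‖ + 0 := fun τ hτ => by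
      rw [add_zero]
      exact hLip _ (hφin u₀ hu₀ τ hτ.1) _ (hφin u₁ hu₁ τ hτ.1)
    have hinit : ‖φ 0 u₀ - φ 0 u₁‖ ≤ ‖u₀ - u₁‖ := by
      rw [hφ0 u₀ hu₀, hφ0 u₁ hu₁]
    have := norm_le_gronwallBound_of_norm_deriv_right_le hcont hder hinit hbound t ⟨ht, le_rfl⟩
    rwa [gronwallBound_ε0, sub_zero] at this
  -- the radius δ where the derivative is close to A
  set η : ℝ := κ * lam' / Ktil with hηdef
  have hη : 0 < η := by positivity
  obtain ⟨δ, hδ0, hδ⟩ : ∃ δ : ℝ, 0 < δ ∧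
      ∀ x ∈ Metric.closedBall xstar δ, ‖fderiv ℝ h x - A‖ ≤ η := by
    have hc : ContinuousAt (fderiv ℝ h) xstar := hDhcont.continuousAt
    rw [Metric.continuousAt_iff] at hc
    obtain ⟨δ', hδ'0, hδ'⟩ := hc η hη
    refine ⟨δ' / 2, by positivity, ?_⟩
    intro x hx
    have h1 : dist x xstar < δ' := lt_of_le_of_lt (Metric.mem_closedBall.mp hx) (by linarith)
    have h2 := hδ' h1
    rw [dist_eq_norm] at h2
    exact h2.le
  -- sublevel value ρ trapping inside the ball
  obtain ⟨ρ, hρ0, hρ⟩ : ∃ ρ : ℝ, 0 < ρ ∧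
      ∀ x ∈ S, V x ≤ ρ → x ∈ Metric.closedBall xstar δ := by
    by_cases hempty : (S \ Metric.ball xstar δ).Nonempty
    · obtain ⟨x₀, hx₀, hmin⟩ := (hcompact.diff Metric.isOpen_ball).exists_isMinOn hempty
        ((hVcont.mono (fun z hz => hSU hz.1)))
      have hne : x₀ ≠ xstar := by
        intro hcon
        exact hx₀.2 (by rw [hcon]; exact Metric.mem_ball_self hδ0)
      have hm : 0 < V x₀ := (hVpos x₀ (hSU hx₀.1) hne).1
      refine ⟨V x₀ / 2, by positivity, ?_⟩
      intro x hx hVx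
      by_cases hxb : x ∈ Metric.ball xstar δ
      · exact Metric.ball_subset_closedBall hxb
      · have := hmin (⟨hx, hxb⟩ : x ∈ S \ Metric.ball xstar δ)
        simp only [Set.mem_setOf_eq] at this
        linarith
    · refine ⟨r, hr, ?_⟩
      intro x hx _
      by_cases hxb : x ∈ Metric.ball xstar δ
      · exact Metric.ball_subset_closedBall hxb
      · exact absurd ⟨hx, hxb⟩ (fun hcon => hempty ⟨x, hcon⟩)
  -- uniform entry time
  obtain ⟨T, hT0, hT⟩ : ∃ T : ℝ, 0 ≤ T ∧ ∀ u ∈ S, ∀ t : ℝ, T ≤ t → V (φ t u) ≤ ρ := by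
    have hO : IsOpen (U ∩ V ⁻¹' Iio ρ) := hVcont.isOpen_inter_preimage hU isOpen_Iio
    set Kset : Set (EuclideanSpace ℝ (Fin d)) := S \ (U ∩ V ⁻¹' Iio ρ) with hKset
    have hKmem : ∀ x, x ∈ Kset ↔ x ∈ S ∧ ρ ≤ V x := by
      intro x
      constructor
      · rintro ⟨hxS', hxO⟩
        refine ⟨hxS', ?_⟩
        by_contra hcon
        exact hxO ⟨hSU hxS', by simpa using lt_of_not_ge hcon⟩
      · rintro ⟨hxS', hxρ⟩
        exact ⟨hxS', fun hcon => absurd hcon.2 (by simpa using hxρ)⟩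
    by_cases hKne : Kset.Nonempty
    · -- minimum of the dissipation rate on Kset
      have hfdVcont : ContinuousOn (fun x => -((fderiv ℝ V x) (h x))) U :=
        ((hV.continuousOn_fderiv_of_isOpen hU le_rfl).clm_apply hhcont.continuousOn).neg
      obtain ⟨x₀, hx₀, hmin⟩ := (hcompact.diff hO).exists_isMinOn hKne
        (hfdVcont.mono (fun z hz => hSU hz.1))
      set c : ℝ := -((fderiv ℝ V x₀) (h x₀)) with hcdef
      have hx₀S : x₀ ∈ S := ((hKmem x₀).mp hx₀).1
      have hx₀ρ : ρ ≤ V x₀ := ((hKmem x₀).mp hx₀).2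
      have hne : x₀ ≠ xstar := by
        intro hcon
        rw [hcon, hVzero] at hx₀ρ
        linarith
      have hc0 : 0 < c := by
        have := (hVpos x₀ (hSU hx₀S) hne).2
        rw [hgrad] at this
        simpa [hcdef] using this
      refine ⟨r / c, by positivity, ?_⟩
      intro u hu t htt
      have hclaim : V (φ (r / c) u) ≤ ρ := by
        by_contra hgt
        push_neg at hgt
        set T' : ℝ := r / c with hT'def
        have hT'0 : 0 ≤ T' := by positivity
        have hmemK : ∀ s ∈ Icc (0:ℝ) T', φ s u ∈ Kset := by
          intro s hs
          refine (hKmem _).mpr ⟨hφin u hu s hs.1, ?_⟩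
          have := hmono u hu (mem_Ici.mpr hs.1) (mem_Ici.mpr hT'0) hs.2
          simp only at this
          linarith
        have hg2 : AntitoneOn (fun s => V (φ s u) + c * s) (Icc 0 T') := by
          apply antitoneOn_of_deriv_nonpos (convex_Icc 0 T')
          · apply ContinuousOn.add
            · exact fun s hs => (hVφd u hu s hs.1).continuousAt.continuousWithinAt
            · exact (continuous_const.mul continuous_id).continuousOn
          · intro s hs
            rw [interior_Icc] at hs
            exact ((hVφd u hu s hs.1.le).add
              (by simpa using (hasDerivAt_id s).const_mul c)).differentiableAt.differentiableWithinAt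
          · intro s hs
            rw [interior_Icc] at hs
            have hds : HasDerivAt (fun s => V (φ s u) + c * s)
                ((fderiv ℝ V (φ s u)) (h (φ s u)) + c) s := by
              have h2 : HasDerivAt (fun s : ℝ => c * s) c s := by
                simpa using (hasDerivAt_id s).const_mul c
              exact (hVφd u hu s hs.1.le).add h2
            rw [hds.deriv]
            have := hmin (hmemK s ⟨hs.1.le, hs.2.le⟩)
            simp only [Set.mem_setOf_eq] at this
            simp only [hcdef] at this ⊢
            linarith
        have hend := hg2 (⟨le_rfl, hT'0⟩ : (0:ℝ) ∈ Icc 0 T') (⟨hT'0, le_rfl⟩ : T' ∈ Icc 0 T') hT'0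
        simp only [hφ0 u hu, mul_zero, add_zero] at hend
        have hcT : c * T' = r := by
          rw [hT'def]
          field_simp
        have hur : V u ≤ r := hu.2
        rw [hcT] at hend
        linarith
      have := hmono u hu (mem_Ici.mpr (by positivity : (0:ℝ) ≤ r / c)) (mem_Ici.mpr ((by positivity : (0:ℝ) ≤ r / c).trans htt)) htt
      simp only at this
      linarith
    · refine ⟨0, le_rfl, ?_⟩
      intro u hu t htt
      by_contra hcon
      push_neg at hcon
      exact hKne ⟨φ t u, (hKmem _).mpr ⟨hφin u hu t htt, hcon.le⟩⟩
  have hball : ∀ u ∈ S, ∀ t : ℝ, T ≤ t → φ t u ∈ Metric.closedBall xstar δ := fun u hu t ht =>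
    hρ _ (hφin u hu t (hT0.trans ht)) (hT u hu t ht)
  -- Step D : exponential contraction after time T
  have stepD : ∀ u₀ ∈ S, ∀ u₁ ∈ S, ∀ t : ℝ, T ≤ t →
      ‖φ t u₀ - φ t u₁‖ ≤ Ktil * ‖φ T u₀ - φ T u₁‖ * Real.exp (-((1 - κ) * lam') * (t - T)) := by
    intro u₀ hu₀ u₁ hu₁
    have hyd : ∀ τ : ℝ, 0 ≤ τ → HasDerivAt (fun τ => φ τ u₀ - φ τ u₁)
        (A (φ τ u₀ - φ τ u₁) +
          (h (φ τ u₀) - h (φ τ u₁) - A (φ τ u₀ - φ τ u₁))) τ := by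
      intro τ hτ
      have hd := (hφd u₀ hu₀ τ hτ).sub (hφd u₁ hu₁ τ hτ)
      have e : A (φ τ u₀ - φ τ u₁) + (h (φ τ u₀) - h (φ τ u₁) - A (φ τ u₀ - φ τ u₁))
          = h (φ τ u₀) - h (φ τ u₁) := by abel
      rw [e]
      exact hd
    have hycont : ContinuousOn (fun τ => φ τ u₀ - φ τ u₁) (Ici 0) :=
      (hφcont u₀ hu₀).sub (hφcont u₁ hu₁)
    have hgcont : ContinuousOn
        (fun τ => h (φ τ u₀) - h (φ τ u₁) - A (φ τ u₀ - φ τ u₁)) (Ici 0) :=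
      ((hhcont.comp_continuousOn (hφcont u₀ hu₀)).sub
        (hhcont.comp_continuousOn (hφcont u₁ hu₁))).sub
        (A.continuous.comp_continuousOn hycont)
    have hgb : ∀ τ : ℝ, T ≤ τ →
        ‖h (φ τ u₀) - h (φ τ u₁) - A (φ τ u₀ - φ τ u₁)‖ ≤ η * ‖φ τ u₀ - φ τ u₁‖ := by
      intro τ hτ
      have hpb : φ τ u₀ ∈ Metric.closedBall xstar δ := hball u₀ hu₀ τ hτ
      have hqb : φ τ u₁ ∈ Metric.closedBall xstar δ := hball u₁ hu₁ τ hτ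
      have key := (convex_closedBall xstar δ).norm_image_sub_le_of_norm_hasFDerivWithin_le
        (f := fun x => h x - A x) (f' := fun x => fderiv ℝ h x - A)
        (fun x _ => ((hhdiff x).hasFDerivAt.sub A.hasFDerivAt).hasFDerivWithinAt)
        (fun x hx => hδ x hx) hqb hpb
      have heq : h (φ τ u₀) - A (φ τ u₀) - (h (φ τ u₁) - A (φ τ u₁))
          = h (φ τ u₀) - h (φ τ u₁) - A (φ τ u₀ - φ τ u₁) := by
        rw [map_sub]
        abel
      rw [heq] at key
      exact key
    have hvc := varconst A Ktil lam' η T hη.le hT0 hexp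
      (fun τ => φ τ u₀ - φ τ u₁)
      (fun τ => h (φ τ u₀) - h (φ τ u₁) - A (φ τ u₀ - φ τ u₁))
      hyd hycont hgcont hgb
    intro t ht
    have h3 := hvc t ht
    have hKη : Ktil * η = κ * lam' := by
      rw [hηdef]
      field_simp
    have hexpeq : Ktil * η - lam' = -((1 - κ) * lam') := by
      rw [hKη]
      ring
    rw [hexpeq] at h3
    exact h3
  -- combine
  refine ⟨Ktil * Real.exp ((L + lam) * T), by positivity, ?_⟩
  intro u₀ hu₀ u₁ hu₁ t ht
  rcases le_total t T with hcase | hcase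
  · have hA := stepA u₀ hu₀ u₁ hu₁ t ht
    have hE : Real.exp (L * t) ≤ Ktil * Real.exp ((L + lam) * T) * Real.exp (-lam * t) := by
      have harg : L * t + lam * t ≤ (L + lam) * T := by
        have := mul_le_mul_of_nonneg_left hcase (add_nonneg hL0 hlamnn)
        linarith
      have h2 : Real.exp (L * t + lam * t) ≤ Real.exp ((L + lam) * T) :=
        Real.exp_le_exp.mpr harg
      have h1 : Real.exp (L * t) = Real.exp (L * t + lam * t) * Real.exp (-lam * t) := by
        rw [← Real.exp_add]
        congr 1
        ring
      rw [h1]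
      have hp := (Real.exp_pos (-lam * t)).le
      calc Real.exp (L * t + lam * t) * Real.exp (-lam * t)
          ≤ Real.exp ((L + lam) * T) * Real.exp (-lam * t) := mul_le_mul_of_nonneg_right h2 hp
        _ ≤ Ktil * Real.exp ((L + lam) * T) * Real.exp (-lam * t) := by
            have h5 : (0:ℝ) ≤ Real.exp ((L + lam) * T) * Real.exp (-lam * t) := by positivity
            nlinarith [mul_nonneg (sub_nonneg.mpr hK) h5]
    calc ‖φ t u₀ - φ t u₁‖ ≤ ‖u₀ - u₁‖ * Real.exp (L * t) := hA
      _ ≤ ‖u₀ - u₁‖ * (Ktil * Real.exp ((L + lam) * T) * Real.exp (-lam * t)) :=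
          mul_le_mul_of_nonneg_left hE (norm_nonneg _)
      _ = Ktil * Real.exp ((L + lam) * T) * ‖u₀ - u₁‖ * Real.exp (-lam * t) := by ring
  · have hD := stepD u₀ hu₀ u₁ hu₁ t hcase
    have hyT : ‖φ T u₀ - φ T u₁‖ ≤ ‖u₀ - u₁‖ * Real.exp (L * T) := stepA u₀ hu₀ u₁ hu₁ T hT0
    have hEe : Real.exp (-((1 - κ) * lam') * (t - T)) ≤ Real.exp (-lam * (t - T)) := by
      apply Real.exp_le_exp.mpr
      have h4 : 0 ≤ t - T := sub_nonneg.mpr hcase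
      nlinarith [hlamle]
    calc ‖φ t u₀ - φ t u₁‖
        ≤ Ktil * ‖φ T u₀ - φ T u₁‖ * Real.exp (-((1 - κ) * lam') * (t - T)) := hD
      _ ≤ Ktil * (‖u₀ - u₁‖ * Real.exp (L * T)) * Real.exp (-lam * (t - T)) := by
          apply mul_le_mul
          · exact mul_le_mul_of_nonneg_left hyT hKpos.le
          · exact hEe
          · exact (Real.exp_pos _).le
          · exact mul_nonneg hKpos.le (mul_nonneg (norm_nonneg _) (Real.exp_pos _).le)
      _ = Ktil * Real.exp ((L + lam) * T) * ‖u₀ - u₁‖ * Real.exp (-lam * t) := by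
          have hX : Real.exp (L * T) * Real.exp (-lam * (t - T))
              = Real.exp ((L + lam) * T) * Real.exp (-lam * t) := by
            rw [← Real.exp_add, ← Real.exp_add]
            congr 1
            ring
          calc Ktil * (‖u₀ - u₁‖ * Real.exp (L * T)) * Real.exp (-lam * (t - T))
              = Ktil * ‖u₀ - u₁‖ * (Real.exp (L * T) * Real.exp (-lam * (t - T))) := by ring
            _ = Ktil * ‖u₀ - u₁‖ * (Real.exp ((L + lam) * T) * Real.exp (-lam * t)) := by
                rw [hX]
            _ = Ktil * Real.exp ((L + lam) * T) * ‖u₀ - u₁‖ * Real.exp (-lam * t) := by ring
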